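/- Let a group G act acylindrically by isometries on a δ-hyperbolic graph Γ. Then there exists an integer P ≥ 1, depending only on δ and the acylindricity constant K(200δ), such that for every element a ∈ G acting hyperbolically with a geodesic quasi-axis, tr(a^P) ≥ 1; equivalently, tr(a) ≥ 1/P. -/

import Mathlib

open Filter Metric Set

/-- A geodesic segment from `x` to `y`: the image of an isometric parametrization
of the interval `[0, dist x y]`. -/
def IsGeodesicSegment {X : Type*} [MetricSpace X] (s : Set X) (x y : X) : Prop :=
  ∃ γ : ℝ → X, γ 0 = x ∧ γ (dist x y) = y ∧
    (∀ u ∈ Set.Icc (0:ℝ) (dist x y), ∀ v ∈ Set.Icc (0:ℝ) (dist x y),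
      dist (γ u) (γ v) = |u - v|) ∧ s = γ '' Set.Icc (0:ℝ) (dist x y)

/-- A geodesic metric space: any two points are joined by a geodesic segment. -/
def GeodesicSpace (X : Type*) [MetricSpace X] : Prop :=
  ∀ x y : X, ∃ s : Set X, IsGeodesicSegment s x y

/-- `δ`-hyperbolicity via thin triangles: each side of a geodesic triangle is contained
in the `δ`-neighborhood of the union of the other two sides. -/
def DeltaHyperbolic (X : Type*) [MetricSpace X] (δ : ℝ) : Prop :=
  ∀ x y z : X, ∀ s t u : Set X, IsGeodesicSegment s x y → IsGeodesicSegment t y z →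
    IsGeodesicSegment u x z → ∀ p ∈ u, ∃ q ∈ s ∪ t, dist p q ≤ δ

/-- A bi-infinite geodesic line, parametrized by arclength. -/
def IsGeodesicLine {X : Type*} [MetricSpace X] (α : ℝ → X) : Prop :=
  ∀ s t : ℝ, dist (α s) (α t) = |s - t|

/-- The `10δ`-overlap `α ∩_{10δ} β = (α ∩ N_{10δ}(β)) ∪ (β ∩ N_{10δ}(α))`
of two geodesic lines. -/
def OverlapSet {X : Type*} [MetricSpace X] (δ : ℝ) (α β : ℝ → X) : Set X :=
  (Set.range α ∩ {x | ∃ t : ℝ, dist x (β t) ≤ 10 * δ}) ∪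
  (Set.range β ∩ {x | ∃ t : ℝ, dist x (α t) ≤ 10 * δ})

/-- The group `G` acts on `X` by isometries. -/
def IsometricAction (G X : Type*) [Group G] [MetricSpace X] [MulAction G X] : Prop :=
  ∀ g : G, Isometry (fun x : X => g • x)

/-- Translation length of a group element acting on `X`. -/
def HasTransLength {G : Type*} [Group G] (X : Type*) [MetricSpace X] [MulAction G X]
    (a : G) (τ : ℝ) : Prop :=
  ∀ x : X, Filter.Tendsto (fun n : ℕ => dist x ((a ^ n) • x) / (n : ℝ))
    Filter.atTop (nhds τ)

/-- A (geodesic) quasi-axis of `a`: a geodesic line `α` with `a • α ⊆ N_C(α)` for some `C ≥ 0`. -/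
def IsQuasiAxis {G : Type*} [Group G] {X : Type*} [MetricSpace X] [MulAction G X]
    (a : G) (α : ℝ → X) : Prop :=
  IsGeodesicLine α ∧ ∃ C : ℝ, 0 ≤ C ∧ ∀ t : ℝ, ∃ s : ℝ, dist (a • α t) (α s) ≤ C

/-- Acylindricity at scale `R` with constants `K`, `L`. -/
def AcylAt (G X : Type*) [Group G] [MetricSpace X] [MulAction G X] (R K L : ℝ) : Prop :=
  1 ≤ K ∧ 1 ≤ L ∧ ∀ x y : X, L ≤ dist x y →
    {g : G | dist x (g • x) ≤ R ∧ dist y (g • y) ≤ R}.Finite ∧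
    ({g : G | dist x (g • x) ≤ R ∧ dist y (g • y) ≤ R}.ncard : ℝ) ≤ K

/-- An acylindrical action, with constant functions `K L : ℝ → ℝ`. -/
def Acylindrical (G X : Type*) [Group G] [MetricSpace X] [MulAction G X]
    (K L : ℝ → ℝ) : Prop :=
  ∀ R : ℝ, 0 < R → AcylAt G X R (K R) (L R)

/-- The homomorphism from the rank-2 free group sending the generators to `a` and `b`. -/
def pairMap {G : Type*} [Group G] (a b : G) : FreeGroup Bool →* G :=
  FreeGroup.lift (fun t => if t then a else b)

/-- `a`, `b` generate a free subgroup of rank two. -/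
def FreePair {G : Type*} [Group G] (a b : G) : Prop :=
  Function.Injective (pairMap a b)

/-- The orbit map of `⟨a, b⟩` into `X` is a quasi-isometric embedding
(word metric with respect to `{a, b}`). -/
def OrbitQIE (G X : Type*) [Group G] [MetricSpace X] [MulAction G X] (a b : G) : Prop :=
  ∃ (x : X) (Λ C : ℝ), 0 < Λ ∧ 0 ≤ C ∧ ∀ w : FreeGroup Bool,
    ((FreeGroup.toWord w).length : ℝ) / Λ - C ≤ dist x (pairMap a b w • x) ∧
    dist x (pairMap a b w • x) ≤ Λ * ((FreeGroup.toWord w).length : ℝ) + C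

/-- Two group elements are independent: no nonzero powers commute. -/
def Independent {G : Type*} [Group G] (a b : G) : Prop :=
  ∀ s t : ℤ, s ≠ 0 → t ≠ 0 → a ^ s * b ^ t ≠ b ^ t * a ^ s

section AuxRealLemmas

private lemma sign_trans {a b c : ℝ} (h1 : 0 < a * b) (h2 : 0 < b * c) : 0 < a * c := by
  rcases mul_pos_iff.mp h1 with ⟨ha, hb⟩ | ⟨ha, hb⟩ <;>
  rcases mul_pos_iff.mp h2 with ⟨hb', hc⟩ | ⟨hb', hc⟩ <;>
  first
    | exact mul_pos ha hc
    | exact mul_pos_of_neg_of_neg ha hc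
    | linarith

private lemma trip {S : ℝ → ℝ} {ε : ℝ} (hε : 0 ≤ ε)
    (h : ∀ u v : ℝ, abs (|S u - S v| - |u - v|) ≤ ε) :
    ∀ v u w : ℝ, v + (2*ε+1) ≤ u → u + (2*ε+1) ≤ w →
      0 < (S u - S v) * (S w - S u) := by
  intro v u w h1 h2
  by_contra hc
  push_neg at hc
  set a := S u - S v with ha
  set b := S w - S u with hb
  have hA := h u v
  have hB := h w u
  have hC := h w v
  rw [abs_le] at hA hB hC
  have e1 : |u - v| = u - v := abs_of_nonneg (by linarith)
  have e2 : |w - u| = w - u := abs_of_nonneg (by linarith)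
  have e3 : |w - v| = w - v := abs_of_nonneg (by linarith)
  rw [e1] at hA; rw [e2] at hB; rw [e3] at hC
  have hab : S w - S v = a + b := by ring
  rw [hab] at hC
  -- |a+b| ≤ max |a| |b| since a*b ≤ 0
  have hmax : |a + b| ≤ max |a| |b| := by
    rcases le_total 0 a with ha0 | ha0 <;> rcases le_total 0 b with hb0 | hb0
    · rw [abs_of_nonneg ha0, abs_of_nonneg hb0, abs_of_nonneg (by linarith)]
      rcases mul_eq_zero.mp (le_antisymm hc (mul_nonneg ha0 hb0)) with h' | h'
      · rw [h']; simpa using le_max_right (0:ℝ) b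
      · rw [h']; simpa using le_max_left a (0:ℝ)
    · rw [abs_of_nonneg ha0, abs_of_nonpos hb0]
      rcases le_total 0 (a+b) with h0 | h0
      · rw [abs_of_nonneg h0]; exact le_max_of_le_left (by linarith)
      · rw [abs_of_nonpos h0]; exact le_max_of_le_right (by linarith)
    · rw [abs_of_nonpos ha0, abs_of_nonneg hb0]
      rcases le_total 0 (a+b) with h0 | h0
      · rw [abs_of_nonneg h0]; exact le_max_of_le_right (by linarith)
      · rw [abs_of_nonpos h0]; exact le_max_of_le_left (by linarith)
    · rw [abs_of_nonpos ha0, abs_of_nonpos hb0, abs_of_nonpos (by linarith)]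
      rcases mul_eq_zero.mp (le_antisymm hc (by nlinarith)) with h' | h'
      · rw [h']; simpa using le_max_right (-(0:ℝ)) (-b)
      · rw [h']; simpa using le_max_left (-a) (-(0:ℝ))
  rcases max_cases |a| |b| with ⟨hm, _⟩ | ⟨hm, _⟩ <;> rw [hm] at hmax <;> linarith


lemma coarse_sign {S : ℝ → ℝ} {ε : ℝ} (hε : 0 ≤ ε)
    (h : ∀ u v : ℝ, abs (|S u - S v| - |u - v|) ≤ ε) :
    ∃ σ : ℝ, (σ = 1 ∨ σ = -1) ∧
      ∀ u v : ℝ, v + (2*ε+1) ≤ u → |S u - S v - σ * (u - v)| ≤ ε := by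
  set g := 2*ε+1 with hg
  have hg1 : 0 < g := by simp [hg]; linarith
  set σ : ℝ := if 0 < S g - S 0 then 1 else -1 with hσ
  refine ⟨σ, by by_cases h0 : 0 < S g - S 0 <;> simp [hσ, h0], ?_⟩
  have hsign : ∀ u v : ℝ, v + g ≤ u → 0 < σ * (S u - S v) := by
    intro u v huv
    set W := max u g + g with hW
    set W' := W + g with hW'
    have hWu : u + g ≤ W := by
      have := le_max_left u g; linarith [hW.le, hW.ge]
    have hWg : g + g ≤ W := by
      have := le_max_right u g; linarith [hW.le, hW.ge]
    have t1 := trip hε h v u W huv hWu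
    have t2 := trip hε h u W W' hWu (by linarith [hW'.ge])
    have t3 := trip hε h 0 g W (by linarith) (by linarith)
    have t4 := trip hε h g W W' (by linarith) (by linarith [hW'.ge])
    -- sign (S u - S v) = sign (S g - S 0)
    have c1 : 0 < (S u - S v) * (S W' - S W) := sign_trans t1 t2
    have c2 : 0 < (S g - S 0) * (S W' - S W) := sign_trans t3 t4
    have c3 : 0 < (S u - S v) * (S g - S 0) := by
      have := sign_trans c1 (by nlinarith : 0 < (S W' - S W) * (S g - S 0))
      nlinarith
    by_cases h0 : 0 < S g - S 0
    · have : 0 < S u - S v := by nlinarith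
      simp [hσ, h0]; linarith
    · have hneg : S g - S 0 < 0 := by
        rcases (trip hε h 0 g (g+g) (by linarith) (by linarith)) with t
        have : S g - S 0 ≠ 0 := by intro hz; rw [hz] at t; simp at t
        cases lt_or_gt_of_ne this with
        | inl h' => exact h'
        | inr h' => exact absurd h' h0
      have : S u - S v < 0 := by nlinarith
      simp [hσ, h0]; linarith
  intro u v huv
  have hs := hsign u v huv
  have habs := h u v
  rw [abs_le] at habs ⊢
  have e1 : |u - v| = u - v := abs_of_nonneg (by linarith)
  rw [e1] at habs
  by_cases h0 : 0 < S g - S 0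
  · have hσ1 : σ = 1 := by simp [hσ, h0]
    rw [hσ1] at hs ⊢
    have hpos : 0 < S u - S v := by linarith [hs]
    rw [abs_of_pos hpos] at habs
    constructor <;> linarith
  · have hσ1 : σ = -1 := by simp [hσ, h0]
    rw [hσ1] at hs ⊢
    have hneg : S u - S v < 0 := by nlinarith
    rw [abs_of_neg hneg] at habs
    constructor <;> linarith


-- translation-type coarse map has coarsely constant displacement
lemma disp_const {S : ℝ → ℝ} {ε g : ℝ} (hg : 0 ≤ g)
    (h : ∀ u v : ℝ, v + g ≤ u → |S u - S v - (u - v)| ≤ ε) :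
    ∀ u v : ℝ, |(S u - u) - (S v - v)| ≤ 2 * ε := by
  have key : ∀ u v : ℝ, v + g ≤ u → |(S u - u) - (S v - v)| ≤ ε := by
    intro u v huv
    have := h u v huv
    have e : (S u - u) - (S v - v) = S u - S v - (u - v) := by ring
    rw [e]; exact this
  intro u v
  set w := max u v + g with hw
  have h1 := key w u (by have := le_max_left u v; linarith [hw.le])
  have h2 := key w v (by have := le_max_right u v; linarith [hw.le])
  calc |(S u - u) - (S v - v)|
      = |((S w - w) - (S v - v)) - ((S w - w) - (S u - u))| := by ring_nf
    _ ≤ |(S w - w) - (S v - v)| + |(S w - w) - (S u - u)| := abs_sub _ _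
    _ ≤ 2 * ε := by linarith

-- a flip-type coarse map has coarsely bounded square displacement
lemma flip_square {S : ℝ → ℝ} {ε g : ℝ} (hε : 0 ≤ ε) (hg : ε ≤ g) (hg0 : 0 < g)
    (h : ∀ u v : ℝ, v + g ≤ u → |S u - S v + (u - v)| ≤ ε) :
    ∀ t : ℝ, |S (S t) - t| ≤ 6 * ε := by
  -- S ∘ S is translation type with constant 2ε at gap g + ε
  have hSS : ∀ u v : ℝ, v + (g + ε) ≤ u → |S (S u) - S (S v) - (u - v)| ≤ 2 * ε := by
    intro u v huv
    have h1 := h u v (by linarith)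
    rw [abs_le] at h1
    have hgap : S u + g ≤ S v := by linarith
    have h2 := h (S v) (S u) hgap
    rw [abs_le] at h2 ⊢
    constructor <;> linarith
  have hconst : ∀ u v : ℝ, |(S (S u) - u) - (S (S v) - v)| ≤ 2 * (2 * ε) := by
    have := disp_const (S := fun t => S (S t)) (ε := 2*ε) (g := g + ε)
      (by linarith) (fun u v huv => hSS u v huv)
    simpa using this
  -- find a point with small square displacement
  have hgood : ∃ u : ℝ, |S (S u) - u| ≤ 2 * ε := by
    set u := |S 0| + 2 * g with hu
    have hu0 : 0 + g ≤ u := by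
      have := abs_nonneg (S 0); linarith [hu.le]
    have h1 := h u 0 hu0
    rw [abs_le] at h1
    have hSu : S u + g ≤ 0 := by
      have := neg_abs_le (S 0)
      have := le_abs_self (S 0)
      simp only [sub_zero] at h1
      linarith [hu.le]
    have h2 := h 0 (S u) hSu
    refine ⟨u, ?_⟩
    rw [abs_le] at h2 ⊢
    simp only [sub_zero] at h1 h2
    constructor <;> linarith
  obtain ⟨u, hu⟩ := hgood
  intro t
  have := hconst t u
  calc |S (S t) - t| = |((S (S t) - t) - (S (S u) - u)) + (S (S u) - u)| := by ring_nf
    _ ≤ |(S (S t) - t) - (S (S u) - u)| + |S (S u) - u| := abs_add_le _ _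
    _ ≤ 6 * ε := by linarith


end AuxRealLemmas

section AuxGeoLemmas

variable {X : Type*} [MetricSpace X]

lemma line_dist {α : ℝ → X} (hα : IsGeodesicLine α) {p q : ℝ} (hpq : p ≤ q) :
    dist (α p) (α q) = q - p := by
  rw [hα p q, abs_of_nonpos (by linarith), neg_sub]

lemma line_seg {α : ℝ → X} (hα : IsGeodesicLine α) {p q : ℝ} (hpq : p ≤ q) :
    IsGeodesicSegment (α '' Icc p q) (α p) (α q) := by
  have hd : dist (α p) (α q) = q - p := line_dist hα hpq
  refine ⟨fun u => α (p + u), by simp, by rw [hd]; congr 1; ring, ?_, ?_⟩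
  · intro u hu v hv
    rw [hα]; congr 1; ring
  · rw [hd]
    ext x
    constructor
    · rintro ⟨t, ht, rfl⟩
      exact ⟨t - p, ⟨by linarith [ht.1], by linarith [ht.2]⟩, by congr 1; ring⟩
    · rintro ⟨t, ht, rfl⟩
      exact ⟨p + t, ⟨by linarith [ht.1], by linarith [ht.2]⟩, rfl⟩

lemma seg_symm {s : Set X} {x y : X} (hs : IsGeodesicSegment s x y) :
    IsGeodesicSegment s y x := by
  obtain ⟨γ, h0, h1, hiso, rfl⟩ := hs
  refine ⟨fun u => γ (dist x y - u), by simpa using h1, ?_, ?_, ?_⟩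
  · rw [dist_comm y x]; simpa using h0
  · intro u hu v hv
    rw [dist_comm y x] at hu hv
    rw [hiso _ ⟨by linarith [hu.2], by linarith [hu.1]⟩
        _ ⟨by linarith [hv.2], by linarith [hv.1]⟩]
    rw [abs_sub_comm]; congr 1; ring
  · rw [dist_comm y x]
    ext z
    constructor
    · rintro ⟨t, ht, rfl⟩
      exact ⟨dist x y - t, ⟨by linarith [ht.2], by linarith [ht.1]⟩, by congr 2; ring⟩
    · rintro ⟨t, ht, rfl⟩
      exact ⟨dist x y - t, ⟨by linarith [ht.2], by linarith [ht.1]⟩, rfl⟩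

lemma seg_mem_dist_le {s : Set X} {x y : X} (hs : IsGeodesicSegment s x y)
    {p : X} (hp : p ∈ s) : dist p x ≤ dist x y ∧ dist p y ≤ dist x y := by
  obtain ⟨γ, h0, h1, hiso, rfl⟩ := hs
  obtain ⟨u, hu, rfl⟩ := hp
  have h0' : (0:ℝ) ∈ Icc (0:ℝ) (dist x y) := ⟨le_refl _, dist_nonneg⟩
  have hD : dist x y ∈ Icc (0:ℝ) (dist x y) := ⟨dist_nonneg, le_refl _⟩
  constructor
  · have e := hiso u hu 0 h0'
    rw [h0] at e
    rw [e, abs_of_nonneg (by linarith [hu.1])]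
    linarith [hu.2]
  · have e := hiso u hu _ hD
    rw [h1] at e
    rw [e, abs_of_nonpos (by linarith [hu.2])]
    linarith [hu.1]

lemma close_line {δ : ℝ} (hgeo : GeodesicSpace X) (hδ : DeltaHyperbolic X δ) (hδ0 : 0 ≤ δ)
    {α β : ℝ → X} (hα : IsGeodesicLine α) (hβ : IsGeodesicLine β)
    {C : ℝ} (hC : 0 ≤ C) (hclose : ∀ t : ℝ, ∃ s : ℝ, dist (β t) (α s) ≤ C) :
    ∀ t : ℝ, ∃ s : ℝ, dist (β t) (α s) ≤ 2 * δ := by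
  intro t
  set T := C + 2*δ + 1 with hT
  have hT0 : 0 < T := by linarith
  obtain ⟨sm, hsm⟩ := hclose (t - T)
  obtain ⟨sp, hsp⟩ := hclose (t + T)
  have seg_u : IsGeodesicSegment (β '' Icc (t-T) (t+T)) (β (t-T)) (β (t+T)) :=
    line_seg hβ (by linarith)
  obtain ⟨s1, hs1⟩ := hgeo (β (t-T)) (α sm)
  obtain ⟨t1, ht1⟩ := hgeo (α sm) (β (t+T))
  have hp : β t ∈ β '' Icc (t-T) (t+T) := ⟨t, ⟨by linarith, by linarith⟩, rfl⟩
  obtain ⟨q, hq, hdq⟩ := hδ (β (t-T)) (α sm) (β (t+T)) s1 t1 _ hs1 ht1 seg_u (β t) hp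
  have hdtm : dist (β t) (β (t-T)) = T := by
    rw [hβ]; rw [abs_of_nonneg (by linarith)]; ring
  have hdtp : dist (β t) (β (t+T)) = T := by
    rw [hβ]; rw [abs_of_nonpos (by linarith)]; ring
  rcases hq with hq | hq
  · -- q on the short side near β (t-T) : contradiction
    exfalso
    have h1 : dist q (β (t-T)) ≤ dist (β (t-T)) (α sm) :=
      (seg_mem_dist_le hs1 hq).1
    have htri : dist (β t) (β (t-T)) ≤ dist (β t) q + dist q (β (t-T)) :=
      dist_triangle _ _ _
    rw [hdtm] at htri
    linarith [h1.trans hsm]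
  · -- q on the geodesic from α sm to β (t+T)
    obtain ⟨t2, ht2⟩ := hgeo (α sp) (β (t+T))
    have main : ∀ s2 : Set X, IsGeodesicSegment s2 (α sm) (α sp) →
        (∀ z ∈ s2, ∃ s : ℝ, z = α s) → ∃ s : ℝ, dist (β t) (α s) ≤ 2 * δ := by
      intro s2 hs2 hval
      obtain ⟨r, hr, hdr⟩ := hδ (α sm) (α sp) (β (t+T)) s2 t2 t1 hs2 ht2 ht1 q hq
      rcases hr with hr | hr
      · obtain ⟨s', rfl⟩ := hval r hr
        refine ⟨s', ?_⟩
        have := dist_triangle (β t) q (α s')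
        linarith
      · exfalso
        have h2 := (seg_mem_dist_le ht2 hr).1
        have hspC : dist (α sp) (β (t+T)) ≤ C := by rw [dist_comm]; exact hsp
        have htri : dist (β t) (β (t+T)) ≤ dist (β t) q + dist q r + dist r (β (t+T)) :=
          dist_triangle4 _ _ _ _
        rw [hdtp] at htri
        have h2' : dist r (β (t+T)) ≤ C := ((seg_mem_dist_le ht2 hr).2).trans hspC
        linarith
    rcases le_total sm sp with hmp | hmp
    · refine main _ (line_seg hα hmp) ?_
      rintro z ⟨s', _, rfl⟩; exact ⟨s', rfl⟩
    · refine main _ (seg_symm (line_seg hα hmp)) ?_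
      rintro z ⟨s', _, rfl⟩; exact ⟨s', rfl⟩


end AuxGeoLemmas

section AuxActionLemmas

variable {G : Type*} [Group G] {X : Type*} [MetricSpace X] [MulAction G X]

lemma disp_ge (hiso : IsometricAction G X) {a : G} {τ : ℝ}
    (hτ : HasTransLength X a τ) (x : X) (m : ℕ) :
    (m : ℝ) * τ ≤ dist x ((a ^ m) • x) := by
  rcases Nat.eq_zero_or_pos m with rfl | hm
  · simp
  have claim : ∀ j : ℕ, dist x ((a ^ (j * m)) • x) ≤ (j : ℝ) * dist x ((a ^ m) • x) := by
    intro j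
    induction j with
    | zero => simp
    | succ n ih =>
      have e : (a ^ ((n+1) * m)) • x = (a ^ (n * m)) • ((a ^ m) • x) := by
        rw [← mul_smul, ← pow_add]
        congr 2
        ring
      rw [e]
      have h1 : dist ((a ^ (n*m)) • x) ((a ^ (n*m)) • ((a ^ m) • x)) = dist x ((a ^ m) • x) :=
        (hiso (a ^ (n*m))).dist_eq x ((a ^ m) • x)
      calc dist x ((a ^ (n*m)) • ((a ^ m) • x))
          ≤ dist x ((a ^ (n*m)) • x) + dist ((a ^ (n*m)) • x) ((a ^ (n*m)) • ((a ^ m) • x)) :=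
            dist_triangle _ _ _
        _ ≤ (n : ℝ) * dist x ((a ^ m) • x) + dist x ((a ^ m) • x) := by rw [h1]; linarith
        _ = ((n+1 : ℕ) : ℝ) * dist x ((a ^ m) • x) := by push_cast; ring
  have hmono : Tendsto (fun j : ℕ => j * m) atTop atTop :=
    tendsto_atTop_mono (fun j => Nat.le_mul_of_pos_right j hm) tendsto_id
  have hcomp : Tendsto (fun j : ℕ => dist x ((a ^ (j * m)) • x) / ((j * m : ℕ) : ℝ))
      atTop (nhds τ) := (hτ x).comp hmono
  have hle : ∀ j : ℕ, 1 ≤ j →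
      dist x ((a ^ (j * m)) • x) / ((j * m : ℕ) : ℝ) ≤ dist x ((a ^ m) • x) / (m : ℝ) := by
    intro j hj
    have hjm : (0:ℝ) < ((j * m : ℕ) : ℝ) := by
      have : 0 < j * m := Nat.mul_pos hj hm
      exact_mod_cast this
    have hm' : (0:ℝ) < (m:ℝ) := by exact_mod_cast hm
    rw [div_le_div_iff₀ hjm hm']
    have := claim j
    push_cast at this ⊢
    nlinarith [dist_nonneg (x := x) (y := (a ^ m) • x)]
  have hlim : τ ≤ dist x ((a ^ m) • x) / (m : ℝ) :=
    le_of_tendsto hcomp (eventually_atTop.mpr ⟨1, hle⟩)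
  have hm' : (0:ℝ) < (m:ℝ) := by exact_mod_cast hm
  calc (m:ℝ) * τ ≤ (m:ℝ) * (dist x ((a ^ m) • x) / (m:ℝ)) := by nlinarith
    _ = dist x ((a ^ m) • x) := by field_simp


set_option maxHeartbeats 1000000 in
lemma key {δ : ℝ} (hiso : IsometricAction G X) (hgeo : GeodesicSpace X)
    (hδ : DeltaHyperbolic X δ) (hδ0 : 0 ≤ δ) {a : G} {τ : ℝ}
    (hτ : HasTransLength X a τ) (hτpos : 0 < τ) {α : ℝ → X}
    (hline : IsGeodesicLine α) {C : ℝ} (hC : 0 ≤ C)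
    (hqa : ∀ t : ℝ, ∃ s : ℝ, dist (a • α t) (α s) ≤ C) :
    ∀ (k : ℕ) (t : ℝ), dist (α t) ((a ^ (k+1)) • α t) ≤ ((k+1 : ℕ) : ℝ) * τ + 16 * δ := by
  have hde : ∀ (g : G) (x y : X), dist (g • x) (g • y) = dist x y :=
    fun g x y => (hiso g).dist_eq x y
  -- powers stay near the axis
  have hNk : ∀ (k : ℕ) (t : ℝ), ∃ s : ℝ, dist ((a ^ (k+1)) • α t) (α s) ≤ ((k+1 : ℕ) : ℝ) * C := by
    intro k
    induction k with
    | zero => intro t; obtain ⟨s, hs⟩ := hqa t; exact ⟨s, by simpa using hs⟩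
    | succ n ih =>
      intro t
      obtain ⟨s, hs⟩ := ih t
      obtain ⟨s', hs'⟩ := hqa s
      refine ⟨s', ?_⟩
      have e : (a ^ (n+2)) • α t = a • ((a ^ (n+1)) • α t) := by
        rw [← mul_smul, ← pow_succ']
      rw [e]
      have h1 : dist (a • ((a ^ (n+1)) • α t)) (a • α s) ≤ ((n+1 : ℕ) : ℝ) * C := by
        rw [hde]; exact hs
      calc dist (a • ((a ^ (n+1)) • α t)) (α s')
          ≤ dist (a • ((a ^ (n+1)) • α t)) (a • α s) + dist (a • α s) (α s') :=
            dist_triangle _ _ _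
        _ ≤ ((n+1 : ℕ) : ℝ) * C + C := add_le_add h1 hs'
        _ = ((n+2 : ℕ) : ℝ) * C := by push_cast; ring
  have hlinek : ∀ k : ℕ, IsGeodesicLine (fun t => (a ^ (k+1)) • α t) := by
    intro k s t
    simp only []
    rw [hde]; exact hline s t
  have hA : ∀ (k : ℕ) (t : ℝ), ∃ s : ℝ, dist ((a ^ (k+1)) • α t) (α s) ≤ 2 * δ := by
    intro k
    exact close_line hgeo hδ hδ0 hline (hlinek k) (by positivity) (hNk k)
  choose T hT using hA
  -- coarse isometry property
  have P1 : ∀ (k : ℕ) (u v : ℝ), abs (|T k u - T k v| - |u - v|) ≤ 4 * δ := by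
    intro k u v
    have h1 := hT k u
    have h2 := hT k v
    have e1 : dist (α (T k u)) (α (T k v)) = |T k u - T k v| := hline _ _
    have e2 : dist ((a ^ (k+1)) • α u) ((a ^ (k+1)) • α v) = |u - v| := by
      rw [hde]; exact hline u v
    have t1 := dist_triangle4 (α (T k u)) ((a ^ (k+1)) • α u) ((a ^ (k+1)) • α v) (α (T k v))
    have t2 := dist_triangle4 ((a ^ (k+1)) • α u) (α (T k u)) (α (T k v)) ((a ^ (k+1)) • α v)
    have c1 : dist (α (T k u)) ((a ^ (k+1)) • α u) = dist ((a ^ (k+1)) • α u) (α (T k u)) :=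
      dist_comm _ _
    have c2 : dist ((a ^ (k+1)) • α v) (α (T k v)) = dist (α (T k v)) ((a ^ (k+1)) • α v) :=
      dist_comm _ _
    rw [abs_le]
    constructor <;> [linarith [t2, h1, h2, e1.symm.le, e2.symm.le]; skip]
    · linarith [t1]
  -- approximate composition
  have P2 : ∀ (j k : ℕ) (t : ℝ), |T (j+k+1) t - T j (T k t)| ≤ 6 * δ := by
    intro j k t
    have e0 : (a ^ (j+k+2)) • α t = (a ^ (j+1)) • ((a ^ (k+1)) • α t) := by
      rw [← mul_smul, ← pow_add]
      congr 2
      omega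
    have h1 := hT (j+k+1) t
    have h2 : dist ((a ^ (j+1)) • ((a ^ (k+1)) • α t)) ((a ^ (j+1)) • α (T k t)) ≤ 2*δ := by
      rw [hde]; exact hT k t
    have h3 := hT j (T k t)
    have e1 : dist (α (T (j+k+1) t)) (α (T j (T k t))) = |T (j+k+1) t - T j (T k t)| :=
      hline _ _
    have t1 := dist_triangle4 (α (T (j+k+1) t)) ((a ^ (j+k+2)) • α t)
      ((a ^ (j+1)) • α (T k t)) (α (T j (T k t)))
    rw [e0] at t1
    have c1 : dist (α (T (j+k+1) t)) ((a ^ (j+1)) • ((a ^ (k+1)) • α t))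
        = dist ((a ^ (j+k+2)) • α t) (α (T (j+k+1) t)) := by rw [e0, dist_comm]
    rw [c1] at t1
    rw [← e1]
    linarith
  -- displacement vs coarse displacement
  have P3 : ∀ (k : ℕ) (t : ℝ), abs (dist (α t) ((a ^ (k+1)) • α t) - |T k t - t|) ≤ 2 * δ := by
    intro k t
    have h1 := hT k t
    have e1 : dist (α (T k t)) (α t) = |T k t - t| := hline _ _
    have h2 := abs_dist_sub_le ((a ^ (k+1)) • α t) (α (T k t)) (α t)
    rw [e1] at h2
    have c1 : dist ((a ^ (k+1)) • α t) (α t) = dist (α t) ((a ^ (k+1)) • α t) := dist_comm _ _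
    rw [c1] at h2
    exact h2.trans h1
  -- signs
  have hsig : ∀ k : ℕ, ∃ σ : ℝ, (σ = 1 ∨ σ = -1) ∧
      ∀ u v : ℝ, v + (2*(4*δ)+1) ≤ u → |T k u - T k v - σ*(u-v)| ≤ 4*δ :=
    fun k => coarse_sign (by linarith) (P1 k)
  choose σ hσpm hσ using hsig
  -- multiplicativity of signs
  have hmul : ∀ j k : ℕ, σ (j+k+1) = σ j * σ k := by
    intro j k
    set Gg : ℝ := 29*δ + 2 with hGg
    have hgap : (0:ℝ) + (2*(4*δ)+1) ≤ Gg := by linarith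
    have d0 := hσ k Gg 0 hgap
    set Δ := T k Gg - T k 0 with hΔ
    have d2 : |T j (T k Gg) - T j (T k 0) - σ j * Δ| ≤ 4*δ := by
      rcases hσpm k with h' | h'
      · rw [h'] at d0
        have hpos : T k 0 + (2*(4*δ)+1) ≤ T k Gg := by
          rw [abs_le] at d0; linarith [d0.1]
        have := hσ j (T k Gg) (T k 0) hpos
        have eΔ : T k Gg - T k 0 = Δ := rfl
        simpa [eΔ] using this
      · rw [h'] at d0
        have hpos : T k Gg + (2*(4*δ)+1) ≤ T k 0 := by
          rw [abs_le] at d0; linarith [d0.2]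
        have h5 := hσ j (T k 0) (T k Gg) hpos
        have e : T j (T k 0) - T j (T k Gg) - σ j * (T k 0 - T k Gg)
            = -(T j (T k Gg) - T j (T k 0) - σ j * Δ) := by rw [hΔ]; ring
        rw [e, abs_neg] at h5
        exact h5
    have p2a := P2 j k Gg
    have p2b := P2 j k 0
    have d4 : |T (j+k+1) Gg - T (j+k+1) 0 - σ j * σ k * Gg| ≤ 20*δ := by
      have habs : |σ j * Δ - σ j * σ k * Gg| ≤ 4*δ := by
        have : σ j * Δ - σ j * σ k * Gg = σ j * (Δ - σ k * Gg - 0) := by ring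
        rw [this, abs_mul]
        rcases hσpm j with h' | h' <;> rw [h'] <;> simp <;> [skip; skip] <;>
          simpa using d0
      have t0 : T (j+k+1) Gg - T (j+k+1) 0 - σ j * σ k * Gg
          = (T (j+k+1) Gg - T j (T k Gg)) - (T (j+k+1) 0 - T j (T k 0))
            + (T j (T k Gg) - T j (T k 0) - σ j * Δ) + (σ j * Δ - σ j * σ k * Gg) := by ring
      rw [t0]
      calc _ ≤ |(T (j+k+1) Gg - T j (T k Gg)) - (T (j+k+1) 0 - T j (T k 0))
            + (T j (T k Gg) - T j (T k 0) - σ j * Δ)| + |σ j * Δ - σ j * σ k * Gg| :=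
              abs_add_le _ _
        _ ≤ |(T (j+k+1) Gg - T j (T k Gg)) - (T (j+k+1) 0 - T j (T k 0))|
            + |T j (T k Gg) - T j (T k 0) - σ j * Δ| + |σ j * Δ - σ j * σ k * Gg| := by
              linarith [abs_add_le ((T (j+k+1) Gg - T j (T k Gg)) - (T (j+k+1) 0 - T j (T k 0)))
                (T j (T k Gg) - T j (T k 0) - σ j * Δ)]
        _ ≤ 20*δ := by
              have := abs_sub (T (j+k+1) Gg - T j (T k Gg)) (T (j+k+1) 0 - T j (T k 0))
              linarith
    have d5 := hσ (j+k+1) Gg 0 hgap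
    rw [abs_le] at d4 d5
    rcases hσpm (j+k+1) with h1 | h1 <;> rcases hσpm j with h2 | h2 <;>
      rcases hσpm k with h3 | h3 <;> rw [h1] at d5 <;> rw [h2, h3] at d4 <;>
      rw [h1, h2, h3] <;> first
        | (exfalso; linarith [d4.1, d4.2, d5.1, d5.2, hGg.le, hGg.ge, hδ0])
        | norm_num
  -- sign of a is +1
  have hσ1 : σ 0 = 1 := by
    by_contra hne
    have hflip : σ 0 = -1 := (hσpm 0).resolve_left hne
    have hσ1' : σ 1 = 1 := by
      have := hmul 0 0
      simp only [Nat.zero_add] at this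
      rw [this, hflip]; norm_num
    have heven : ∀ n : ℕ, σ (2*n) = -1 := by
      intro n
      induction n with
      | zero => simpa using hflip
      | succ m ih =>
        have h2 : σ (2*m+1+1) = σ (2*m) * σ 1 := by
          have := hmul (2*m) 1
          convert this using 2
        have e : 2*(m+1) = 2*m+1+1 := by omega
        rw [e, h2, ih, hσ1']; norm_num
    obtain ⟨n0, hn0⟩ := exists_nat_gt ((32*δ) / τ)
    set n := n0 + 1 with hn
    have hflipn : ∀ u v : ℝ, v + (2*(4*δ)+1) ≤ u →
        |T (2*n) u - T (2*n) v + (u - v)| ≤ 4*δ := by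
      intro u v huv
      have := hσ (2*n) u v huv
      rw [heven n] at this
      have e : T (2*n) u - T (2*n) v - (-1)*(u-v) = T (2*n) u - T (2*n) v + (u - v) := by ring
      rwa [e] at this
    have hfs := flip_square (by linarith : (0:ℝ) ≤ 4*δ) (by linarith) (by linarith) hflipn 0
    have hp2 := P2 (2*n) (2*n) 0
    have hp3 := P3 (2*n+2*n+1) 0
    have hge := disp_ge hiso hτ (α 0) (2*n+2*n+1+1)
    have hub : dist (α 0) ((a ^ (2*n+2*n+1+1)) • α 0) ≤ 32*δ := by
      rw [abs_le] at hp3 hp2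
      have h6 : |T (2*n+2*n+1) 0 - 0| ≤ 30*δ := by
        rw [abs_le]
        rw [abs_le] at hfs
        constructor <;> linarith [hp2.1, hp2.2, hfs.1, hfs.2]
      linarith [hp3.1, hp3.2, h6, abs_nonneg (T (2*n+2*n+1) 0 - 0),
        le_abs_self (T (2*n+2*n+1) 0 - 0), neg_abs_le (T (2*n+2*n+1) 0 - 0)]
    have hτn : 32*δ < ((2*n+2*n+1+1 : ℕ):ℝ) * τ := by
      have h1 : (32*δ) < (n0:ℝ) * τ := by
        rw [div_lt_iff₀ hτpos] at hn0
        linarith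
      have h2 : (n0:ℝ) ≤ ((2*n+2*n+1+1 : ℕ):ℝ) := by
        have : n0 ≤ 2*n+2*n+1+1 := by omega
        exact_mod_cast this
      nlinarith
    linarith
  have hσall : ∀ k : ℕ, σ k = 1 := by
    intro k
    induction k with
    | zero => exact hσ1
    | succ m ih =>
      have := hmul m 0
      simp only [Nat.add_zero] at this
      rw [this, ih, hσ1]; norm_num
  -- final bound
  intro k t
  have htrans : ∀ u v : ℝ, v + (2*(4*δ)+1) ≤ u → |T k u - T k v - (u - v)| ≤ 4*δ := by
    intro u v huv
    have := hσ k u v huv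
    rw [hσall k] at this
    simpa using this
  have hdisp := disp_const (by linarith : (0:ℝ) ≤ 2*(4*δ)+1) htrans
  set m := T k t - t with hm
  have hBrec : ∀ n : ℕ, 1 ≤ n →
      |T ((n+1)*(k+1) - 1) t - T (n*(k+1) - 1) t - m| ≤ 14 * δ := by
    intro n hn
    have hp2 := P2 k (n*(k+1) - 1) t
    have e : k + (n*(k+1) - 1) + 1 = (n+1)*(k+1) - 1 := by
      have h1 : 1 ≤ n*(k+1) := Nat.one_le_iff_ne_zero.mpr (by positivity)
      have h2 : (n+1)*(k+1) = n*(k+1) + (k+1) := by ring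
      omega
    rw [e] at hp2
    have hd := hdisp (T (n*(k+1) - 1) t) t
    have t0 : T ((n+1)*(k+1) - 1) t - T (n*(k+1) - 1) t - m
        = (T ((n+1)*(k+1) - 1) t - T k (T (n*(k+1) - 1) t))
          + ((T k (T (n*(k+1) - 1) t) - T (n*(k+1) - 1) t) - (T k t - t)) := by
      rw [hm]; ring
    rw [t0]
    calc _ ≤ |T ((n+1)*(k+1) - 1) t - T k (T (n*(k+1) - 1) t)|
        + |(T k (T (n*(k+1) - 1) t) - T (n*(k+1) - 1) t) - (T k t - t)| := abs_add_le _ _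
      _ ≤ 14 * δ := by linarith
  have hBn : ∀ n : ℕ, 1 ≤ n → |T (n*(k+1) - 1) t - t - n * m| ≤ n * (14 * δ) := by
    intro n
    induction n with
    | zero => omega
    | succ q ih =>
      intro _
      rcases Nat.eq_zero_or_pos q with rfl | hq
      · simp only [Nat.zero_add, one_mul]
        rw [Nat.add_sub_cancel]
        push_cast
        simp [hm]
        linarith [hδ0]
      · have h1 := ih hq
        have h2 := hBrec q hq
        have t0 : T ((q+1)*(k+1) - 1) t - t - ((q+1 : ℕ):ℝ) * m
            = (T ((q+1)*(k+1) - 1) t - T (q*(k+1) - 1) t - m)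
              + (T (q*(k+1) - 1) t - t - (q:ℕ) * m) := by push_cast; ring
        rw [t0]
        calc _ ≤ |T ((q+1)*(k+1) - 1) t - T (q*(k+1) - 1) t - m|
            + |T (q*(k+1) - 1) t - t - (q:ℕ) * m| := abs_add_le _ _
          _ ≤ ((q+1:ℕ):ℝ) * (14*δ) := by push_cast; push_cast at h1; linarith
  -- upper bound on |m|
  have hub : |m| ≤ ((k+1:ℕ):ℝ) * τ + 14 * δ := by
    by_contra hcon
    push_neg at hcon
    set θ : ℝ := |m| - 14*δ - ((k+1:ℕ):ℝ) * τ with hθ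
    have hθpos : 0 < θ := by rw [hθ]; linarith
    have hlow : ∀ n : ℕ, 1 ≤ n →
        (n:ℝ) * (((k+1:ℕ):ℝ) * τ + θ) - 2*δ ≤ dist (α t) ((a ^ (n*(k+1))) • α t) := by
      intro n hn
      have hp3 := P3 (n*(k+1) - 1) t
      have e : n*(k+1) - 1 + 1 = n*(k+1) := by
        have h1 : 1 ≤ n*(k+1) := Nat.one_le_iff_ne_zero.mpr (by positivity)
        omega
      rw [e] at hp3
      have hb := hBn n hn
      have h1 : (n:ℝ) * |m| - (n:ℝ) * (14*δ) ≤ |T (n*(k+1) - 1) t - t| := by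
        have h2 : |(n:ℝ) * m| - |T (n*(k+1) - 1) t - t| ≤ |T (n*(k+1) - 1) t - t - n * m| := by
          have := abs_sub_abs_le_abs_sub ((n:ℝ) * m) (T (n*(k+1) - 1) t - t)
          have e2 : (n:ℝ) * m - (T (n*(k+1) - 1) t - t) = -(T (n*(k+1) - 1) t - t - n*m) := by ring
          rw [e2, abs_neg] at this
          linarith
        rw [abs_mul, Nat.abs_cast] at h2
        linarith
      rw [abs_le] at hp3
      have h3 : |m| = ((k+1:ℕ):ℝ) * τ + 14*δ + θ := by rw [hθ]; ring
      nlinarith [hp3.1, abs_nonneg (T (n*(k+1) - 1) t - t), show (1:ℝ) ≤ (n:ℝ) from by exact_mod_cast hn]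
    have hmono : Tendsto (fun n : ℕ => n * (k+1)) atTop atTop :=
      tendsto_atTop_mono (fun n => Nat.le_mul_of_pos_right n (Nat.succ_pos k)) tendsto_id
    have hcomp : Tendsto (fun n : ℕ => dist (α t) ((a ^ (n*(k+1))) • α t) / ((n*(k+1) : ℕ):ℝ))
        atTop (nhds τ) := (hτ (α t)).comp hmono
    have hε : 0 < θ / (2*((k+1:ℕ):ℝ)) := by positivity
    obtain ⟨N, hN⟩ := (Metric.tendsto_atTop.mp hcomp) _ hε
    obtain ⟨n1, hn1⟩ := exists_nat_gt ((4*δ) / θ)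
    set n := N + n1 + 1 with hnn
    have hn1' : 1 ≤ n := by omega
    have hnN : N ≤ n := by omega
    have hclose := hN n hnN
    rw [Real.dist_eq, abs_lt] at hclose
    have hpos : (0:ℝ) < ((n*(k+1) : ℕ):ℝ) := by
      have : 0 < n*(k+1) := by positivity
      exact_mod_cast this
    have hup : dist (α t) ((a ^ (n*(k+1))) • α t)
        ≤ (τ + θ / (2*((k+1:ℕ):ℝ))) * ((n*(k+1) : ℕ):ℝ) := by
      have h' : dist (α t) ((a ^ (n*(k+1))) • α t) / ((n*(k+1) : ℕ):ℝ)
          < τ + θ / (2*((k+1:ℕ):ℝ)) := by linarith [hclose.2]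
      have h'' := (div_lt_iff₀ hpos).mp h'
      linarith
    have hlo := hlow n hn1'
    have hcast : ((n*(k+1) : ℕ):ℝ) = (n:ℝ) * ((k+1:ℕ):ℝ) := by push_cast; ring
    rw [hcast] at hup
    have hkpos : (0:ℝ) < ((k+1:ℕ):ℝ) := by positivity
    have hexp : (τ + θ / (2*((k+1:ℕ):ℝ))) * ((n:ℝ) * ((k+1:ℕ):ℝ))
        = (n:ℝ) * (((k+1:ℕ):ℝ) * τ) + (n:ℝ) * θ / 2 := by field_simp
    rw [hexp] at hup
    have hnθ : (4*δ) < (n:ℝ) * θ := by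
      have h2 : (n1:ℝ) ≤ (n:ℝ) := by exact_mod_cast (by omega : n1 ≤ n)
      rw [div_lt_iff₀ hθpos] at hn1
      have h3 := mul_le_mul_of_nonneg_right h2 hθpos.le
      linarith
    have hexpand : (n:ℝ) * (((k+1:ℕ):ℝ) * τ + θ) = (n:ℝ) * (((k+1:ℕ):ℝ) * τ) + (n:ℝ) * θ := by
      ring
    rw [hexpand] at hlo
    clear_value n θ m
    linarith [hlo, hup, hnθ]
  -- conclude
  have hp3 := P3 k t
  rw [abs_le] at hp3
  have : |m| ≥ 0 := abs_nonneg m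
  have hmm : |T k t - t| = |m| := by rw [hm]
  rw [hmm] at hp3
  linarith [hp3.2]



end AuxActionLemmas

set_option maxHeartbeats 1000000 in
/-- Lemma 3: If `G` acts acylindrically on a `δ`-hyperbolic graph, there is
an integer `P ≥ 1` such that every element of `G` acting hyperbolically with a geodesic
quasi-axis satisfies `tr(a) ≥ 1/P` (equivalently `tr(a^P) ≥ 1`). -/
theorem uniform_translation_length_lower_bound
    {G : Type*} [Group G] {X : Type*} [MetricSpace X] [MulAction G X] {δ : ℝ}
    (K L : ℝ → ℝ) (hiso : IsometricAction G X) (hgeo : GeodesicSpace X)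
    (hδ : DeltaHyperbolic X δ) (hacyl : Acylindrical G X K L) :
    ∃ P : ℕ, 1 ≤ P ∧ ∀ (a : G) (τ : ℝ), HasTransLength X a τ → 0 < τ →
      (∃ α : ℝ → X, IsQuasiAxis a α) → 1 / (P : ℝ) ≤ τ := by
  classical
  set R : ℝ := 16 * max δ 0 + 1 with hR
  have hmax0 : (0:ℝ) ≤ max δ 0 := le_max_right δ 0
  have hRpos : 0 < R := by rw [hR]; linarith
  obtain ⟨hK1, hL1, hmain⟩ := hacyl R hRpos
  set P : ℕ := max 1 ⌈K R⌉₊ with hP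
  have hP1 : 1 ≤ P := le_max_left _ _
  have hPK : (K R) ≤ (P:ℝ) := by
    calc K R ≤ (⌈K R⌉₊ : ℝ) := Nat.le_ceil _
      _ ≤ (P:ℝ) := by exact_mod_cast le_max_right 1 ⌈K R⌉₊
  clear_value P
  refine ⟨P, hP1, ?_⟩
  intro a τ hτ hτpos hax
  obtain ⟨α, hline, C, hC0, hqa⟩ := hax
  -- δ is nonnegative
  have hδ0 : 0 ≤ δ := by
    obtain ⟨s, hs⟩ := hgeo (α 0) (α 0)
    have hmem : α 0 ∈ s := by
      obtain ⟨γ, h0, h1, hiso', hset⟩ := hs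
      rw [hset]
      exact ⟨0, ⟨le_refl _, dist_nonneg⟩, h0⟩
    obtain ⟨q, hq, hdq⟩ := hδ (α 0) (α 0) (α 0) s s s hs hs hs (α 0) hmem
    have hq' : q ∈ s := by rcases hq with h | h <;> exact h
    have h1 : dist q (α 0) ≤ dist (α 0) (α 0) := (seg_mem_dist_le hs hq').1
    rw [dist_self] at h1
    have h2 : dist (α 0) q = 0 :=
      le_antisymm (by rw [dist_comm]; exact h1) dist_nonneg
    linarith
  have hR16 : R = 16 * δ + 1 := by rw [hR, max_eq_left hδ0]
  clear_value R
  by_contra hcon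
  push_neg at hcon
  have hPpos : (0:ℝ) < (P:ℝ) := by exact_mod_cast hP1
  have hPτ : (P:ℝ) * τ < 1 := by
    rw [lt_div_iff₀ hPpos] at hcon
    linarith
  have hkey := key hiso hgeo hδ hδ0 hτ hτpos hline hC0 hqa
  -- the two far apart points on the axis
  have hL0 : (0:ℝ) ≤ L R := by linarith
  have hdxy : dist (α 0) (α (L R)) = L R := by
    rw [hline 0 (L R), abs_of_nonpos (by linarith), neg_sub, sub_zero]
  obtain ⟨hfin, hcard⟩ := hmain (α 0) (α (L R)) (by rw [hdxy])
  -- the powers a^i, i ≤ P, all lie in the acylindricity set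
  have hdisp : ∀ i : ℕ, i ≤ P →
      dist (α 0) ((a ^ i) • α 0) ≤ R ∧ dist (α (L R)) ((a ^ i) • α (L R)) ≤ R := by
    intro i hi
    cases i with
    | zero =>
      constructor <;> simp [pow_zero, one_smul] <;> linarith
    | succ j =>
      have h1 := hkey j 0
      have h2 := hkey j (L R)
      have hile : ((j+1:ℕ):ℝ) ≤ (P:ℝ) := by exact_mod_cast hi
      have h3 : ((j+1:ℕ):ℝ) * τ ≤ (P:ℝ) * τ :=
        mul_le_mul_of_nonneg_right hile hτpos.le
      constructor <;> [linarith; linarith]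
  -- the powers are pairwise distinct
  have hinj : ∀ i j : ℕ, a ^ i = a ^ j → i = j := by
    have haux : ∀ i j : ℕ, i < j → a ^ i = a ^ j → False := by
      intro i j hij he
      have hd : dist (α 0) ((a ^ (j - i)) • α 0) = 0 := by
        have e1 : (a ^ j) • α 0 = (a ^ i) • ((a ^ (j-i)) • α 0) := by
          rw [← mul_smul, ← pow_add]
          congr 2
          omega
        have e2 : dist ((a ^ i) • α 0) ((a ^ i) • ((a ^ (j-i)) • α 0))
            = dist (α 0) ((a ^ (j-i)) • α 0) := (hiso (a ^ i)).dist_eq _ _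
        rw [← e2, ← e1, ← he, dist_self]
      have hge := disp_ge hiso hτ (α 0) (j - i)
      rw [hd] at hge
      have hji : (1:ℝ) ≤ ((j - i : ℕ):ℝ) := by
        have : 1 ≤ j - i := by omega
        exact_mod_cast this
      nlinarith
    intro i j he
    rcases Nat.lt_trichotomy i j with h | h | h
    · exact absurd he (fun he => haux i j h he)
    · exact h
    · exact absurd he.symm (fun he => haux j i h he)
  -- counting contradiction
  have hsub : ↑((Finset.range (P+1)).image (fun i => a ^ i)) ⊆
      {g : G | dist (α 0) (g • α 0) ≤ R ∧ dist (α (L R)) (g • α (L R)) ≤ R} := by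
    intro g hg
    simp only [Finset.coe_image, Finset.coe_range, Set.mem_image, Set.mem_Iio] at hg
    obtain ⟨i, hi, rfl⟩ := hg
    exact hdisp i (by omega)
  have hcardim : ((Finset.range (P+1)).image (fun i => a ^ i)).card = P+1 := by
    rw [Finset.card_image_of_injOn, Finset.card_range]
    intro i _ j _ he
    exact hinj i j he
  have h1 : (P+1 : ℕ) ≤
      {g : G | dist (α 0) (g • α 0) ≤ R ∧ dist (α (L R)) (g • α (L R)) ≤ R}.ncard := by
    have := Set.ncard_le_ncard hsub hfin
    rwa [Set.ncard_coe_finset, hcardim] at this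
  have h2 : ((P+1 : ℕ):ℝ) ≤ K R := le_trans (by exact_mod_cast h1) hcard
  push_cast at h2
  linarith
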